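/- The matrix B of the marking-witness transform of an ordered Π-net satisfies BW = A, where W is the incidence matrix of the net and A is the incidence matrix of its reaction graph; in particular, for p ∈ P_i the row B(p) is a witness of the level-i complex containing p, and every ordered Π-net has deficiency zero (is a Π²-net). -/
import Mathlib


open Finset

/-- A transition `t` is enabled at marking `m`. -/
def enabledAt {P T : Type*} (Wm : P → T → ℕ) (m : P → ℕ) (t : T) : Prop :=
  ∀ p, Wm p t ≤ m p

/-- Firing transition `t` at marking `m`. -/
def fireAt {P T : Type*} (Wm Wp : P → T → ℕ) (m : P → ℕ) (t : T) : P → ℕ :=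
  fun p => m p - Wm p t + Wp p t

/-- One step of the reachability graph. -/
def step {P T : Type*} (Wm Wp : P → T → ℕ) (m m' : P → ℕ) : Prop :=
  ∃ t, enabledAt Wm m t ∧ m' = fireAt Wm Wp m t

/-- Reachability relation. -/
def reach {P T : Type*} (Wm Wp : P → T → ℕ) : (P → ℕ) → (P → ℕ) → Prop :=
  Relation.ReflTransGen (step Wm Wp)

/-- Input bag of a transition. -/
def preBag {P T : Type*} (Wm : P → T → ℕ) (t : T) : P → ℕ := fun p => Wm p t

/-- Output bag of a transition. -/
def postBag {P T : Type*} (Wp : P → T → ℕ) (t : T) : P → ℕ := fun p => Wp p t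

/-- The finite set of complexes of the net. -/
def complexes {P T : Type*} [Fintype P] [Fintype T] [DecidableEq P]
    (Wm Wp : P → T → ℕ) : Finset (P → ℕ) :=
  (Finset.univ.image (preBag Wm)) ∪ (Finset.univ.image (postBag Wp))

/-- `c` is a complex of the net. -/
def isComplex {P T : Type*} (Wm Wp : P → T → ℕ) (c : P → ℕ) : Prop :=
  (∃ t, c = preBag Wm t) ∨ (∃ t, c = postBag Wp t)

/-- Arc of the reaction graph. -/
def rarc {P T : Type*} (Wm Wp : P → T → ℕ) (c c' : P → ℕ) : Prop :=
  ∃ t, c = preBag Wm t ∧ c' = postBag Wp t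

/-- Weak reversibility: every connected component of the reaction graph is
strongly connected. -/
def weaklyReversible {P T : Type*} (Wm Wp : P → T → ℕ) : Prop :=
  ∀ c c', isComplex Wm Wp c → isComplex Wm Wp c' →
    Relation.ReflTransGen (fun a b => rarc Wm Wp a b ∨ rarc Wm Wp b a) c c' →
    Relation.ReflTransGen (rarc Wm Wp) c c'

/-- An `n`-level ordered Π-net.  Levels are indexed by `Fin n`, index `i`
standing for level `i+1` of the informal definition.  Every level is a
strongly connected state machine through which the transitions of that level
route exactly one token; transitions of level `i+1` may in addition consume
and produce tokens of level `i`; every level (except the lowest) is connected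
to the one below it; two transitions of a level sharing their input (resp.
output) place at that level have equal input (resp. output) bags; and the net
is weakly reversible. -/
structure OrderedPiNet (n : ℕ) (P T : Type*) [Fintype P] [Fintype T]
    [DecidableEq P] [DecidableEq T] where
  Wm : P → T → ℕ
  Wp : P → T → ℕ
  lvlP : P → Fin n
  lvlT : T → Fin n
  lvl_surj : Function.Surjective lvlP
  inPlace : T → P
  outPlace : T → P
  inPlace_lvl : ∀ t, lvlP (inPlace t) = lvlT t
  outPlace_lvl : ∀ t, lvlP (outPlace t) = lvlT t
  Wm_in : ∀ t, Wm (inPlace t) t = 1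
  Wp_out : ∀ t, Wp (outPlace t) t = 1
  Wm_own : ∀ t p, lvlP p = lvlT t → p ≠ inPlace t → Wm p t = 0
  Wp_own : ∀ t p, lvlP p = lvlT t → p ≠ outPlace t → Wp p t = 0
  Wm_below : ∀ t p, Wm p t ≠ 0 → lvlP p = lvlT t ∨ (lvlP p : ℕ) + 1 = (lvlT t : ℕ)
  Wp_below : ∀ t p, Wp p t ≠ 0 → lvlP p = lvlT t ∨ (lvlP p : ℕ) + 1 = (lvlT t : ℕ)
  connected_below : ∀ i : Fin n, (i : ℕ) ≠ 0 →
    ∃ t p, lvlT t = i ∧ (lvlP p : ℕ) + 1 = (i : ℕ) ∧ Wm p t ≠ 0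
  sameIn : ∀ t t', inPlace t = inPlace t' → ∀ p, Wm p t = Wm p t'
  sameOut : ∀ t t', outPlace t = outPlace t' → ∀ p, Wp p t = Wp p t'
  strong : ∀ p q, lvlP p = lvlP q →
    Relation.ReflTransGen (fun a b => ∃ t, inPlace t = a ∧ outPlace t = b) p q
  wr : weaklyReversible Wm Wp

namespace OrderedPiNet

variable {n : ℕ} {P T : Type*} [Fintype P] [Fintype T] [DecidableEq P] [DecidableEq T]

/-- The potential `pot(p, q)`: the number of tokens `t•(q)` put in `q` by a
common input transition `t` of `p` and `q`, when `q` is one level below `p`,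
and `0` otherwise. -/
noncomputable def pot (N : OrderedPiNet n P T) (p q : P) : ℕ :=
  if h : ((N.lvlP q : ℕ) + 1 = (N.lvlP p : ℕ)) ∧ ∃ t, N.outPlace t = p ∧ N.Wp q t ≠ 0
  then N.Wp q h.2.choose else 0

/-- The potential of a place: `pot(p) = ∑_{q} pot(p, q)`. -/
noncomputable def potT (N : OrderedPiNet n P T) (p : P) : ℕ := ∑ q, N.pot p q

/-- The marking witness transform `m ↦ m̃`:
`m̃(p) = m(p) − ∑_{r one level above p} m̃(r) · pot(r, p)`. -/
noncomputable def mw (N : OrderedPiNet n P T) (m : P → ℤ) (p : P) : ℤ :=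
  m p - ∑ r : P, (if h : (N.lvlP p : ℕ) + 1 = (N.lvlP r : ℕ)
    then N.mw m r * (N.pot r p : ℤ) else 0)
termination_by n - (N.lvlP p : ℕ)
decreasing_by
  have h1 : (N.lvlP r : ℕ) < n := (N.lvlP r).isLt
  omega

/-- The row `v_i` of S-invariants applied to a vector: `v_i · x = ∑_{p ∈ P_i} x̃(p)`. -/
noncomputable def vRow (N : OrderedPiNet n P T) (i : Fin n) (x : P → ℤ) : ℤ :=
  ∑ p ∈ Finset.univ.filter (fun p => N.lvlP p = i), N.mw x p

/-- Number of tokens of `m` in `P_i`. -/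
def lvlCount (N : OrderedPiNet n P T) (i : Fin n) (m : P → ℕ) : ℕ :=
  ∑ p ∈ Finset.univ.filter (fun p => N.lvlP p = i), m p

/-- Number of tokens of `m` in `P_{i−1}` (the level just below `i`). -/
def belowCount (N : OrderedPiNet n P T) (i : Fin n) (m : P → ℕ) : ℕ :=
  ∑ p ∈ Finset.univ.filter (fun p => (N.lvlP p : ℕ) + 1 = (i : ℕ)), m p

/-- The level-`i` minimal marked potential `φ_i(m)`. -/
noncomputable def phi (N : OrderedPiNet n P T) (i : Fin n) (m : P → ℕ) : ℕ :=
  if N.lvlCount i m = 0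
  then (Finset.univ.filter (fun p => N.lvlP p = i)).sup N.potT
  else sInf (N.potT '' {p | N.lvlP p = i ∧ m p ≠ 0})

/-- The Π³ condition: every interface place has maximal potential on its level. -/
def isPi3 (N : OrderedPiNet n P T) : Prop :=
  ∀ p t, (N.lvlP p : ℕ) + 1 = (N.lvlT t : ℕ) → N.Wp p t ≠ 0 →
    ∀ q, N.lvlP q = N.lvlP p → N.potT q ≤ N.potT p

/-- One step using only transitions of level index at most `i`. -/
def stepUpTo (N : OrderedPiNet n P T) (i : Fin n) (m m' : P → ℕ) : Prop :=
  ∃ t, N.lvlT t ≤ i ∧ enabledAt N.Wm m t ∧ m' = fireAt N.Wm N.Wp m t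

/-- Reachability using only transitions of level index at most `i` (the set `R_i`). -/
def reachUpTo (N : OrderedPiNet n P T) (i : Fin n) : (P → ℕ) → (P → ℕ) → Prop :=
  Relation.ReflTransGen (N.stepUpTo i)

/-- `i`-liveness. -/
def iLive (N : OrderedPiNet n P T) (i : Fin n) (m : P → ℕ) : Prop :=
  ∀ t, N.lvlT t ≤ i → ∃ m', N.reachUpTo i m m' ∧ enabledAt N.Wm m' t

/-- The `i`-condition: `m(P_i) > 0` and `m(P_{j−1}) ≥ φ_j(m)` for all levels
`j` with `2 ≤ j ≤ i` (in 1-based numbering). -/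
def iCond (N : OrderedPiNet n P T) (i : Fin n) (m : P → ℕ) : Prop :=
  N.lvlCount i m ≠ 0 ∧
  ∀ j : Fin n, 1 ≤ (j : ℕ) → j ≤ i → N.phi j m ≤ N.belowCount j m

/-! ### Auxiliary lemmas -/

section Aux

variable (N : OrderedPiNet n P T)

lemma lvlT_eq_of_pre_post {t t' : T} (h : ∀ p, N.Wm p t = N.Wp p t') :
    N.lvlT t = N.lvlT t' := by
  have h1 : N.Wp (N.inPlace t) t' ≠ 0 := by rw [← h, N.Wm_in]; simp
  have h2 : N.Wm (N.outPlace t') t ≠ 0 := by rw [h, N.Wp_out]; simp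
  have a1 := N.Wp_below t' _ h1
  have a2 := N.Wm_below t _ h2
  rw [N.inPlace_lvl] at a1
  rw [N.outPlace_lvl] at a2
  have b1 : (N.lvlT t : ℕ) = N.lvlT t' ∨ (N.lvlT t : ℕ) + 1 = N.lvlT t' := by
    rcases a1 with a1 | a1
    · exact Or.inl (congrArg Fin.val a1)
    · exact Or.inr a1
  have b2 : (N.lvlT t' : ℕ) = N.lvlT t ∨ (N.lvlT t' : ℕ) + 1 = N.lvlT t := by
    rcases a2 with a2 | a2
    · exact Or.inl (congrArg Fin.val a2)
    · exact Or.inr a2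
  have : (N.lvlT t : ℕ) = N.lvlT t' := by omega
  exact Fin.val_injective this

lemma pre_post_top {t t' : T} (h : ∀ p, N.Wm p t = N.Wp p t') :
    N.inPlace t = N.outPlace t' := by
  have hl := N.lvlT_eq_of_pre_post h
  by_contra hne
  have h0 : N.Wm (N.outPlace t') t = 0 :=
    N.Wm_own t _ (by rw [N.outPlace_lvl, hl]) (Ne.symm hne)
  rw [h, N.Wp_out] at h0
  exact one_ne_zero h0

lemma pre_pre_top {t t' : T} (h : ∀ p, N.Wm p t = N.Wm p t') :
    N.inPlace t = N.inPlace t' := by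
  have h1 : N.Wm (N.inPlace t) t' ≠ 0 := by rw [← h, N.Wm_in]; simp
  have h2 : N.Wm (N.inPlace t') t ≠ 0 := by rw [h, N.Wm_in]; simp
  have a1 := N.Wm_below t' _ h1
  have a2 := N.Wm_below t _ h2
  rw [N.inPlace_lvl] at a1 a2
  have hl : (N.lvlT t : ℕ) = N.lvlT t' := by
    rcases a1 with a1 | a1 <;> rcases a2 with a2 | a2 <;>
      first
        | omega
        | (try have := congrArg Fin.val a1) <;> (try have := congrArg Fin.val a2) <;> omega
  by_contra hne
  have h0 : N.Wm (N.inPlace t') t = 0 :=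
    N.Wm_own t _ (by rw [N.inPlace_lvl]; exact Fin.val_injective hl.symm ▸ rfl) (Ne.symm hne)
  rw [h, N.Wm_in] at h0
  exact one_ne_zero h0

lemma post_post_top {t t' : T} (h : ∀ p, N.Wp p t = N.Wp p t') :
    N.outPlace t = N.outPlace t' := by
  have h1 : N.Wp (N.outPlace t) t' ≠ 0 := by rw [← h, N.Wp_out]; simp
  have h2 : N.Wp (N.outPlace t') t ≠ 0 := by rw [h, N.Wp_out]; simp
  have a1 := N.Wp_below t' _ h1
  have a2 := N.Wp_below t _ h2
  rw [N.outPlace_lvl] at a1 a2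
  have hl : (N.lvlT t : ℕ) = N.lvlT t' := by
    rcases a1 with a1 | a1 <;> rcases a2 with a2 | a2 <;>
      first
        | omega
        | (try have := congrArg Fin.val a1) <;> (try have := congrArg Fin.val a2) <;> omega
  by_contra hne
  have h0 : N.Wp (N.outPlace t') t = 0 :=
    N.Wp_own t _ (by rw [N.outPlace_lvl]; exact Fin.val_injective hl.symm ▸ rfl) (Ne.symm hne)
  rw [h, N.Wp_out] at h0
  exact one_ne_zero h0

/-- Key lemma: if the input place of `t` is the output place of `t'`, then the
input bag of `t` equals the output bag of `t'` (uses weak reversibility). -/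
lemma wm_eq_wp {t t' : T} (h : N.inPlace t = N.outPlace t') (p : P) :
    N.Wm p t = N.Wp p t' := by
  have hc : Relation.ReflTransGen (rarc N.Wm N.Wp) (postBag N.Wp t') (preBag N.Wm t') :=
    N.wr _ _ (Or.inr ⟨t', rfl⟩) (Or.inl ⟨t', rfl⟩)
      (Relation.ReflTransGen.single (Or.inr ⟨t', rfl, rfl⟩))
  rcases Relation.ReflTransGen.cases_head hc with heq | ⟨c, ⟨u, hu1, hu2⟩, -⟩
  · -- postBag t' = preBag t'
    have hb : ∀ q, N.Wm q t' = N.Wp q t' := fun q => (congrFun heq q).symm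
    have htop := N.pre_post_top hb
    have hin : N.inPlace t = N.inPlace t' := by rw [h, ← htop]
    rw [N.sameIn t t' hin p, hb p]
  · -- postBag t' = preBag u for some transition u
    have hb : ∀ q, N.Wm q u = N.Wp q t' := fun q => (congrFun hu1 q).symm
    have htop := N.pre_post_top hb
    rw [N.sameIn t u (by rw [h, htop]), hb p]

lemma exists_out (t : T) : ∃ u, N.outPlace u = N.inPlace t := by
  have hc : Relation.ReflTransGen (rarc N.Wm N.Wp) (postBag N.Wp t) (preBag N.Wm t) :=
    N.wr _ _ (Or.inr ⟨t, rfl⟩) (Or.inl ⟨t, rfl⟩)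
      (Relation.ReflTransGen.single (Or.inr ⟨t, rfl, rfl⟩))
  rcases hc.cases_tail with heq | ⟨c, -, u, hc1, hc2⟩
  · -- preBag t = postBag t
    have hb : ∀ q, N.Wm q t = N.Wp q t := fun q => congrFun heq q
    exact ⟨t, (N.pre_post_top hb).symm⟩
  · -- preBag t = postBag u
    have hb : ∀ q, N.Wm q t = N.Wp q u := fun q => congrFun hc2 q
    exact ⟨u, (N.pre_post_top hb).symm⟩

lemma pot_out {p : P} {t : T} (h : (N.lvlP p : ℕ) + 1 = N.lvlT t) :
    N.pot (N.outPlace t) p = N.Wp p t := by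
  rw [pot]
  split_ifs with hc
  · obtain ⟨h1, h2⟩ := hc.2.choose_spec
    exact N.sameOut _ t h1 p
  · symm
    by_contra hne
    exact hc ⟨by rw [N.outPlace_lvl]; exact h, ⟨t, rfl, hne⟩⟩

lemma pot_in {p : P} {t : T} (h : (N.lvlP p : ℕ) + 1 = N.lvlT t) :
    N.pot (N.inPlace t) p = N.Wm p t := by
  rw [pot]
  split_ifs with hc
  · obtain ⟨h1, h2⟩ := hc.2.choose_spec
    exact (N.wm_eq_wp h1.symm p).symm
  · symm
    by_contra hne
    obtain ⟨u, hu⟩ := N.exists_out t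
    refine hc ⟨by rw [N.inPlace_lvl]; exact h, ⟨u, hu, ?_⟩⟩
    rw [← N.wm_eq_wp hu.symm p]
    exact hne

/-- The crucial computation: the marking-witness transform of the column of
the incidence matrix at `t`. -/
lemma mw_col (t : T) (p : P) :
    N.mw (fun q => (N.Wp q t : ℤ) - (N.Wm q t : ℤ)) p =
      (if N.outPlace t = p then 1 else 0) - (if N.inPlace t = p then 1 else 0) := by
  suffices H : ∀ k, ∀ p : P, n - (N.lvlP p : ℕ) ≤ k →
      N.mw (fun q => (N.Wp q t : ℤ) - (N.Wm q t : ℤ)) p =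
        (if N.outPlace t = p then 1 else 0) - (if N.inPlace t = p then 1 else 0) from
    H (n - (N.lvlP p : ℕ)) p le_rfl
  intro k
  induction k with
  | zero =>
    intro p hp
    have := (N.lvlP p).isLt
    omega
  | succ k ih =>
    intro p hp
    rw [mw]
    have hlt := (N.lvlP p).isLt
    have hrw : ∀ r : P,
        (if h : (N.lvlP p : ℕ) + 1 = (N.lvlP r : ℕ) then
            N.mw (fun q => (N.Wp q t : ℤ) - (N.Wm q t : ℤ)) r * (N.pot r p : ℤ) else 0) =
        (if (N.lvlP p : ℕ) + 1 = (N.lvlP r : ℕ) then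
            ((if N.outPlace t = r then 1 else 0) -
              (if N.inPlace t = r then 1 else 0)) * (N.pot r p : ℤ) else 0) := by
      intro r
      by_cases hcond : (N.lvlP p : ℕ) + 1 = (N.lvlP r : ℕ)
      · rw [dif_pos hcond, if_pos hcond, ih r (by omega)]
      · rw [dif_neg hcond, if_neg hcond]
    rw [Finset.sum_congr rfl fun r _ => hrw r]
    by_cases hA : (N.lvlP p : ℕ) = (N.lvlT t : ℕ)
    · -- level of p is the level of t
      have hAf : N.lvlP p = N.lvlT t := Fin.val_injective hA
      have e1 : (N.Wp p t : ℤ) = if N.outPlace t = p then 1 else 0 := by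
        split_ifs with h
        · rw [← h, N.Wp_out]; norm_num
        · rw [N.Wp_own t p hAf (fun hh => h hh.symm)]; norm_num
      have e2 : (N.Wm p t : ℤ) = if N.inPlace t = p then 1 else 0 := by
        split_ifs with h
        · rw [← h, N.Wm_in]; norm_num
        · rw [N.Wm_own t p hAf (fun hh => h hh.symm)]; norm_num
      have hz : ∀ r ∈ (Finset.univ : Finset P),
          (if (N.lvlP p : ℕ) + 1 = (N.lvlP r : ℕ) then
            ((if N.outPlace t = r then 1 else 0) -
              (if N.inPlace t = r then 1 else 0)) * (N.pot r p : ℤ) else 0) = 0 := by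
        intro r _
        by_cases hcond : (N.lvlP p : ℕ) + 1 = (N.lvlP r : ℕ)
        · have ho : N.outPlace t ≠ r := by
            intro hh; rw [← hh, N.outPlace_lvl] at hcond; omega
          have hi : N.inPlace t ≠ r := by
            intro hh; rw [← hh, N.inPlace_lvl] at hcond; omega
          rw [if_pos hcond, if_neg ho, if_neg hi]; ring
        · rw [if_neg hcond]
      rw [Finset.sum_eq_zero hz, e1, e2]; ring
    · by_cases hB : (N.lvlP p : ℕ) + 1 = (N.lvlT t : ℕ)
      · -- level of p is just below the level of t
        have ho : N.outPlace t ≠ p := by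
          intro hh; rw [← hh, N.outPlace_lvl] at hB; omega
        have hi : N.inPlace t ≠ p := by
          intro hh; rw [← hh, N.inPlace_lvl] at hB; omega
        have hterm : ∀ r : P,
            (if (N.lvlP p : ℕ) + 1 = (N.lvlP r : ℕ) then
              ((if N.outPlace t = r then 1 else 0) -
                (if N.inPlace t = r then 1 else 0)) * (N.pot r p : ℤ) else 0) =
            (if N.outPlace t = r then (N.pot r p : ℤ) else 0) -
              (if N.inPlace t = r then (N.pot r p : ℤ) else 0) := by
          intro r
          by_cases hcond : (N.lvlP p : ℕ) + 1 = (N.lvlP r : ℕ)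
          · rw [if_pos hcond]; split_ifs <;> ring
          · have ho' : N.outPlace t ≠ r := by
              intro hh; rw [← hh, N.outPlace_lvl] at hcond; omega
            have hi' : N.inPlace t ≠ r := by
              intro hh; rw [← hh, N.inPlace_lvl] at hcond; omega
            rw [if_neg hcond, if_neg ho', if_neg hi']; ring
        rw [Finset.sum_congr rfl fun r _ => hterm r, Finset.sum_sub_distrib,
          Finset.sum_ite_eq, Finset.sum_ite_eq, if_pos (Finset.mem_univ _),
          if_pos (Finset.mem_univ _), N.pot_out hB, N.pot_in hB, if_neg ho, if_neg hi]
        ring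
      · -- p is unrelated to t
        have ho : N.outPlace t ≠ p := by
          intro hh; rw [← hh, N.outPlace_lvl] at hA; omega
        have hi : N.inPlace t ≠ p := by
          intro hh; rw [← hh, N.inPlace_lvl] at hA; omega
        have e1 : N.Wp p t = 0 := by
          by_contra hne
          rcases N.Wp_below t p hne with hh | hh
          · exact hA (congrArg Fin.val hh)
          · exact hB hh
        have e2 : N.Wm p t = 0 := by
          by_contra hne
          rcases N.Wm_below t p hne with hh | hh
          · exact hA (congrArg Fin.val hh)
          · exact hB hh
        have hz : ∀ r ∈ (Finset.univ : Finset P),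
            (if (N.lvlP p : ℕ) + 1 = (N.lvlP r : ℕ) then
              ((if N.outPlace t = r then 1 else 0) -
                (if N.inPlace t = r then 1 else 0)) * (N.pot r p : ℤ) else 0) = 0 := by
          intro r _
          by_cases hcond : (N.lvlP p : ℕ) + 1 = (N.lvlP r : ℕ)
          · have ho' : N.outPlace t ≠ r := by
              intro hh; rw [← hh, N.outPlace_lvl] at hcond; omega
            have hi' : N.inPlace t ≠ r := by
              intro hh; rw [← hh, N.inPlace_lvl] at hcond; omega
            rw [if_pos hcond, if_neg ho', if_neg hi']; ring
          · rw [if_neg hcond]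
        rw [Finset.sum_eq_zero hz, e1, e2, if_neg ho, if_neg hi]
        norm_num

/-- Linearity of the marking-witness transform: finite sums. -/
lemma mw_sum {ι : Type*} (s : Finset ι) (f : ι → P → ℤ) (p : P) :
    N.mw (fun r => ∑ q ∈ s, f q r) p = ∑ q ∈ s, N.mw (f q) p := by
  suffices H : ∀ k, ∀ p : P, n - (N.lvlP p : ℕ) ≤ k →
      N.mw (fun r => ∑ q ∈ s, f q r) p = ∑ q ∈ s, N.mw (f q) p from
    H (n - (N.lvlP p : ℕ)) p le_rfl
  intro k
  induction k with
  | zero =>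
    intro p hp
    have := (N.lvlP p).isLt
    omega
  | succ k ih =>
    intro p hp
    have hlt := (N.lvlP p).isLt
    rw [mw]
    have hrw : ∀ r : P,
        (if h : (N.lvlP p : ℕ) + 1 = (N.lvlP r : ℕ) then
            N.mw (fun r' => ∑ q ∈ s, f q r') r * (N.pot r p : ℤ) else 0) =
        ∑ q ∈ s, (if (N.lvlP p : ℕ) + 1 = (N.lvlP r : ℕ) then
            N.mw (f q) r * (N.pot r p : ℤ) else 0) := by
      intro r
      split_ifs with hcond
      · rw [ih r (by omega), Finset.sum_mul]
      · simp
    rw [Finset.sum_congr rfl fun r _ => hrw r, Finset.sum_comm]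
    rw [← Finset.sum_sub_distrib]
    refine Finset.sum_congr rfl fun q _ => ?_
    conv_rhs => rw [mw]
    congr 1

/-- Linearity of the marking-witness transform: scalar multiples. -/
lemma mw_smul (c : ℤ) (m : P → ℤ) (p : P) :
    N.mw (fun r => c * m r) p = c * N.mw m p := by
  suffices H : ∀ k, ∀ p : P, n - (N.lvlP p : ℕ) ≤ k →
      N.mw (fun r => c * m r) p = c * N.mw m p from
    H (n - (N.lvlP p : ℕ)) p le_rfl
  intro k
  induction k with
  | zero =>
    intro p hp
    have := (N.lvlP p).isLt
    omega
  | succ k ih =>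
    intro p hp
    have hlt := (N.lvlP p).isLt
    rw [mw]
    have hrw : ∀ r : P,
        (if h : (N.lvlP p : ℕ) + 1 = (N.lvlP r : ℕ) then
            N.mw (fun r' => c * m r') r * (N.pot r p : ℤ) else 0) =
        c * (if (N.lvlP p : ℕ) + 1 = (N.lvlP r : ℕ) then
            N.mw m r * (N.pot r p : ℤ) else 0) := by
      intro r
      split_ifs with hcond
      · rw [ih r (by omega)]; ring
      · ring
    rw [Finset.sum_congr rfl fun r _ => hrw r, ← Finset.mul_sum]
    conv_rhs => rw [mw]
    rw [mul_sub]
    congr 2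

/-- The first half of the main theorem as a lemma. -/
lemma mw_row (p : P) (t : T) :
    ∑ q, N.mw (fun r => if r = q then 1 else 0) p * ((N.Wp q t : ℤ) - (N.Wm q t : ℤ)) =
      (if N.outPlace t = p then 1 else 0) - (if N.inPlace t = p then 1 else 0) := by
  have hdec : (fun r => (N.Wp r t : ℤ) - (N.Wm r t : ℤ)) =
      fun r => ∑ q : P, ((N.Wp q t : ℤ) - (N.Wm q t : ℤ)) * (if r = q then 1 else 0) := by
    funext r
    simp
  have := N.mw_col t p
  rw [hdec] at this
  rw [N.mw_sum Finset.univ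
    (fun q r => ((N.Wp q t : ℤ) - (N.Wm q t : ℤ)) * (if r = q then 1 else 0)) p] at this
  rw [← this]
  refine Finset.sum_congr rfl fun q _ => ?_
  rw [N.mw_smul ((N.Wp q t : ℤ) - (N.Wm q t : ℤ)) (fun r => if r = q then 1 else 0) p]
  ring

/-- Every complex has a unique "top place" characterising pre- and post-bags. -/
lemma exists_topPlace {c : P → ℕ} (hc : c ∈ complexes N.Wm N.Wp) :
    ∃ p : P, (∀ t, preBag N.Wm t = c ↔ N.inPlace t = p) ∧
      (∀ t, postBag N.Wp t = c ↔ N.outPlace t = p) := by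
  rcases Finset.mem_union.1 hc with h | h <;>
    obtain ⟨t0, -, rfl⟩ := Finset.mem_image.1 h
  · refine ⟨N.inPlace t0, fun t => ⟨fun he => ?_, fun he => ?_⟩,
      fun t => ⟨fun he => ?_, fun he => ?_⟩⟩
    · exact N.pre_pre_top fun q => congrFun he q
    · funext q; exact N.sameIn t t0 he q
    · exact (N.pre_post_top fun q => (congrFun he q).symm).symm
    · funext q; exact (N.wm_eq_wp (t := t0) (t' := t) he.symm q).symm
  · refine ⟨N.outPlace t0, fun t => ⟨fun he => ?_, fun he => ?_⟩,
      fun t => ⟨fun he => ?_, fun he => ?_⟩⟩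
    · exact N.pre_post_top fun q => congrFun he q
    · funext q; exact N.wm_eq_wp (t := t) (t' := t0) he q
    · exact N.post_post_top fun q => congrFun he q
    · funext q; exact N.sameOut t t0 he q

end Aux

end OrderedPiNet

/-- The matrix `B` of the marking-witness transform (with rows
`B(p) = mw(δ_·)(p)`) satisfies `B W = A`, where `A` is the incidence matrix of
the reaction graph reindexed by places via the bijection sending a level-`i`
complex to its level-`i` place; in particular each row `B(p)` is a witness of
the complex containing `p`, and the net has deficiency zero (is a Π²-net). -/
theorem stmt14 {n : ℕ} {P T : Type*} [Fintype P] [Fintype T] [DecidableEq P]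
    [DecidableEq T] (N : OrderedPiNet n P T) :
    (∀ (p : P) (t : T),
      ∑ q, N.mw (fun r => if r = q then 1 else 0) p * ((N.Wp q t : ℤ) - (N.Wm q t : ℤ)) =
        (if N.outPlace t = p then 1 else 0) - (if N.inPlace t = p then 1 else 0)) ∧
    (∃ B : Matrix {c // c ∈ complexes N.Wm N.Wp} P ℚ,
      ∀ (c : {c // c ∈ complexes N.Wm N.Wp}) (t : T),
        ((if postBag N.Wp t = c.1 then 1 else 0) -
            (if preBag N.Wm t = c.1 then 1 else 0) : ℚ) =
          ∑ p, B c p * ((N.Wp p t : ℚ) - (N.Wm p t : ℚ))) := by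
  constructor
  · exact fun p t => N.mw_row p t
  · have H := fun c : {c // c ∈ complexes N.Wm N.Wp} => N.exists_topPlace c.2
    choose pl hpl1 hpl2 using H
    refine ⟨fun c p => ((N.mw (fun r => if r = p then 1 else 0) (pl c) : ℤ) : ℚ), ?_⟩
    intro c t
    have key := N.mw_row (pl c) t
    have hcast : ∑ p, ((N.mw (fun r => if r = p then 1 else 0) (pl c) : ℤ) : ℚ) *
        ((N.Wp p t : ℚ) - (N.Wm p t : ℚ)) =
        ((∑ p, N.mw (fun r => if r = p then 1 else 0) (pl c) *
          ((N.Wp p t : ℤ) - (N.Wm p t : ℤ)) : ℤ) : ℚ) := by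
      push_cast
      rfl
    rw [hcast, key]
    have h1 : (if postBag N.Wp t = c.1 then (1:ℚ) else 0) =
        (if N.outPlace t = pl c then (1:ℚ) else 0) := by
      by_cases hh : N.outPlace t = pl c
      · rw [if_pos hh, if_pos ((hpl2 c t).2 hh)]
      · rw [if_neg hh, if_neg (fun he => hh ((hpl2 c t).1 he))]
    have h2 : (if preBag N.Wm t = c.1 then (1:ℚ) else 0) =
        (if N.inPlace t = pl c then (1:ℚ) else 0) := by
      by_cases hh : N.inPlace t = pl c
      · rw [if_pos hh, if_pos ((hpl1 c t).2 hh)]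
      · rw [if_neg hh, if_neg (fun he => hh ((hpl1 c t).1 he))]
    rw [h1, h2]
    push_cast
    split_ifs <;> norm_num
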